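/- arXiv:2601.09505 — 2 statements merged into one kernel-verified Lean document; each statement's English description precedes it below -/
import Mathlib

section
/- A disjoint union f ⊔ g of two monomorphisms of simplicial sets is an extension by a set if and only if both f and g are extensions by a set. -/
open CategoryTheory CategoryTheory.Limits Simplicial

noncomputable section

open Opposite

namespace Paper

/-- The constant map from `X` to `Δ[1]` at the vertex `k`. -/
def constMap (X : SSet.{0}) (k : Fin 2) : X ⟶ Δ[1] where
  app m := ↾fun _ => SSet.stdSimplex.const 1 k m
  naturality := by
    intro m m' g
    ext x
    apply ULift.ext
    apply SimplexCategory.Hom.ext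
    ext i
    rfl

/-- The two inclusions of `X` into the cylinder `X ⨯ Δ[1]`. -/
def cylIncl (X : SSet.{0}) (k : Fin 2) : X ⟶ X ⨯ Δ[1] :=
  prod.lift (𝟙 X) (constMap X k)

/-- Simplicial homotopy between two maps `X ⟶ K`. -/
def SHomotopic {X K : SSet.{0}} (u v : X ⟶ K) : Prop :=
  ∃ H : X ⨯ Δ[1] ⟶ K, cylIncl X 0 ≫ H = u ∧ cylIncl X 1 ≫ H = v

/-- A map of simplicial sets is a weak homotopy equivalence iff it induces a
bijection on homotopy classes of maps into every Kan complex. -/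
def IsWeakEquiv {X Y : SSet.{0}} (f : X ⟶ Y) : Prop :=
  ∀ (K : SSet.{0}), SSet.KanComplex K →
    ((∀ u : X ⟶ K, ∃ v : Y ⟶ K, SHomotopic (f ≫ v) u) ∧
     (∀ v w : Y ⟶ K, SHomotopic (f ≫ v) (f ≫ w) → SHomotopic v w))

/-- The edge relation on vertices of a simplicial set. -/
def edgeRel (X : SSet.{0}) (x y : X _⦋0⦌) : Prop :=
  ∃ e : X _⦋1⦌, X.δ 1 e = x ∧ X.δ 0 e = y

/-- The set of connected components of a simplicial set. -/
def π₀ (X : SSet.{0}) : Type := Quot (edgeRel X)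

/-- Functoriality of `π₀`. -/
def π₀Map {X Y : SSet.{0}} (f : X ⟶ Y) : π₀ X → π₀ Y :=
  Quot.map (f.app _) (by
    rintro x y ⟨e, hx, hy⟩
    refine ⟨f.app _ e, ?_, ?_⟩ <;>
      simp [← hx, ← hy, SimplicialObject.δ, FunctorToTypes.naturality])

/-- The discrete simplicial set on a set `R`. -/
def disc (R : Type) : SSet.{0} := (Functor.const _).obj R

/-- A monomorphism of simplicial sets `f : X ⟶ Y` is an extension by a set if there is
a set `R` and a weak homotopy equivalence `X ⨿ R ⟶ Y` extending `f`. -/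
def IsExtensionBySet {X Y : SSet.{0}} (f : X ⟶ Y) : Prop :=
  ∃ (R : Type) (g : disc R ⟶ Y), IsWeakEquiv (coprod.desc f g)


-- ## Auxiliary development

-- basic lemmas

lemma comp_constMap {P Q : SSet.{0}} (u : P ⟶ Q) (k : Fin 2) :
    u ≫ constMap Q k = constMap P k := by ext m x; rfl

lemma cylIncl_fst (P : SSet.{0}) (k : Fin 2) : cylIncl P k ≫ prod.fst = 𝟙 P :=
  prod.lift_fst _ _

lemma cylIncl_natural {P Q : SSet.{0}} (u : P ⟶ Q) (k : Fin 2) :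
    cylIncl P k ≫ prod.map u (𝟙 Δ[1]) = u ≫ cylIncl Q k := by
  simp [cylIncl, prod.lift_map, prod.comp_lift, comp_constMap]

lemma SHomotopic.of_eq {P K : SSet.{0}} {u v : P ⟶ K} (h : u = v) : SHomotopic u v :=
  ⟨prod.fst ≫ u, by rw [← Category.assoc, cylIncl_fst, Category.id_comp],
    by rw [← Category.assoc, cylIncl_fst, Category.id_comp, h]⟩

lemma SHomotopic.refl {P K : SSet.{0}} (u : P ⟶ K) : SHomotopic u u := .of_eq rfl

@[simp] lemma disc_map {R : Type} {m m' : SimplexCategoryᵒᵖ} (θ : m ⟶ m') (r : R) :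
    (disc R).map θ r = r := rfl

lemma disc_hom_naturality {R : Type} {C : SSet.{0}} (c : disc R ⟶ C)
    {m m' : SimplexCategoryᵒᵖ} (θ : m ⟶ m') (r : R) :
    C.map θ (c.app m r) = c.app m' r :=
  (FunctorToTypes.naturality c θ r).symm

/-- map from a simplicial set determined by a choice of vertex in the target -/
def ptMap (P : SSet.{0}) {K : SSet.{0}} (k₀ : K.obj (op (SimplexCategory.mk 0))) : P ⟶ K where
  app m := ↾fun _ => K.map (SimplexCategory.const m.unop (SimplexCategory.mk 0) 0).op k₀
  naturality := by
    intro m m' θ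
    ext x
    change K.map (SimplexCategory.const m'.unop _ 0).op k₀
      = K.map θ (K.map (SimplexCategory.const m.unop (SimplexCategory.mk 0) 0).op k₀)
    rw [← FunctorToTypes.map_comp_apply]
    exact congrArg (fun f => K.map f k₀)
      (congrArg Quiver.Hom.op (SimplexCategory.eq_const_to_zero _).symm)

/-- constant map to a discrete simplicial set -/
def constD (P : SSet.{0}) {R : Type} (r : R) : P ⟶ disc R where
  app _ := ↾fun _ => r
  naturality _ _ _ := rfl

lemma disc_simplex_hom {n : ℕ} {R : Type} (u : Δ[n] ⟶ disc R) (m : SimplexCategoryᵒᵖ)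
    (x : Δ[n].obj m) : u.app m x = u.app (op (SimplexCategory.mk n)) ⟨𝟙 _⟩ := by
  have := FunctorToTypes.naturality u x.down.op (⟨𝟙 _⟩ : Δ[n].obj (op (SimplexCategory.mk n)))
  have hx : Δ[n].map x.down.op ⟨𝟙 _⟩ = x := by
    apply ULift.ext
    exact Category.comp_id x.down
  rw [hx] at this
  exact this

/-- the unique map to the point -/
def toPt (P : SSet.{0}) : P ⟶ Δ[0] where
  app m := ↾fun _ => SSet.stdSimplex.const 0 0 m
  naturality := by
    intro m m' g
    ext x
    apply ULift.ext
    apply SimplexCategory.Hom.ext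
    ext i
    rfl

lemma toPt_unique {P : SSet.{0}} (u v : P ⟶ Δ[0]) : u = v := by
  ext m x

/-- The map `Δ[0] ⟶ B` associated to a vertex of `B`. -/
def vtx {B : SSet.{0}} (b : B.obj (op (SimplexCategory.mk 0))) : Δ[0] ⟶ B where
  app m := ↾fun (x : Δ[0].obj m) => B.map x.down.op b
  naturality := by
    intro m m' θ
    ext x
    change B.map (θ.unop ≫ x.down).op b = B.map θ (B.map x.down.op b)
    rw [op_comp, FunctorToTypes.map_comp_apply, Quiver.Hom.op_unop]

@[simp] lemma vtx_app_id {B : SSet.{0}} (b : B.obj (op (SimplexCategory.mk 0))) :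
    (vtx b).app (op (SimplexCategory.mk 0)) ⟨𝟙 _⟩ = b := by
  change B.map (𝟙 _) b = b
  simp

/-- Key connectivity fact: the two vertices of `Δ[1]` are identified by
any map to a discrete simplicial set. -/
lemma constMap_comp_disc {P : SSet.{0}} {R : Type} (G : Δ[1] ⟶ disc R) :
    constMap P 0 ≫ G = constMap P 1 ≫ G := by
  ext m x
  have key : ∀ k : Fin 2, G.app m (SSet.stdSimplex.const 1 k m)
      = G.app (op (SimplexCategory.mk 1)) ⟨𝟙 _⟩ := by
    intro k
    have := FunctorToTypes.naturality G (SimplexCategory.const m.unop (SimplexCategory.mk 1) k).op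
      (⟨𝟙 _⟩ : Δ[1].obj (op (SimplexCategory.mk 1)))
    exact this
  exact (key 0).trans (key 1).symm

lemma horn_zero_empty {i : Fin 1} {m : SimplexCategoryᵒᵖ} (x : (Λ[0, i]).obj m) : False := by
  apply x.2
  rw [Set.eq_univ_iff_forall]
  intro j
  right
  fin_cases j
  fin_cases i
  rfl

lemma kan_disc (R : Type) [Nonempty R] : SSet.KanComplex (disc R) := by
  rw [SSet.KanComplex.iff]
  intro n i f hf
  obtain ⟨j₀, hj₀⟩ : ∃ j, j ≠ i := ⟨i.succAbove 0, Fin.succAbove_ne i 0⟩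
  refine ⟨constD _ ((f j₀ hj₀).app (op (SimplexCategory.mk n)) ⟨𝟙 _⟩), fun j hj => ?_⟩
  ext m x
  refine Eq.trans ?_ (disc_simplex_hom (f j hj) m x).symm
  change (f j₀ hj₀).app (op (SimplexCategory.mk n)) ⟨𝟙 _⟩
    = (f j hj).app (op (SimplexCategory.mk n)) ⟨𝟙 _⟩
  cases n with
  | zero =>
    have : j = j₀ := by
      fin_cases i <;> fin_cases j <;> fin_cases j₀ <;> simp_all
    subst this
    rfl
  | succ n =>
    have key : ∀ (j k : Fin (n + 3)) (hj : j ≠ i) (hk : k ≠ i), j < k →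
        (f j hj).app (op (SimplexCategory.mk (n + 1))) ⟨𝟙 _⟩
          = (f k hk).app (op (SimplexCategory.mk (n + 1))) ⟨𝟙 _⟩ := by
      intro j k hj hk hjk
      have := ConcreteCategory.congr_hom (NatTrans.congr_app (hf j k hj hk hjk)
        (op (SimplexCategory.mk n))) (⟨𝟙 _⟩ : Δ[n].obj (op (SimplexCategory.mk n)))
      change (f j hj).app _ _ = (f k hk).app _ _ at this
      rw [disc_simplex_hom (f j hj), disc_simplex_hom (f k hk)] at this
      exact this
    rcases lt_trichotomy j₀ j with h | h | h
    · exact key _ _ _ _ h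
    · subst h; rfl
    · exact (key _ _ _ _ h).symm

section Equivs

variable (P Q : SSet.{0}) (m : SimplexCategoryᵒᵖ)

/-- pointwise description of binary coproducts of simplicial sets -/
def coprodObjEquiv : P.obj m ⊕ Q.obj m ≃ (P ⨿ Q).obj m :=
  Equiv.ofBijective
    (Sum.elim ((coprod.inl : P ⟶ P ⨿ Q).app m) ((coprod.inr : Q ⟶ P ⨿ Q).app m)) (by
      have heq : Sum.elim ((coprod.inl : P ⟶ P ⨿ Q).app m) ((coprod.inr : Q ⟶ P ⨿ Q).app m)
          = (FunctorToTypes.binaryCoproductEquiv P Q m).symm := by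
        funext x
        cases x <;> rfl
      rw [heq]
      exact (FunctorToTypes.binaryCoproductEquiv P Q m).symm.bijective)

/-- pointwise description of binary products of simplicial sets -/
def prodObjEquiv : (P ⨯ Q).obj m ≃ P.obj m × Q.obj m :=
  Equiv.ofBijective
    (fun z => (((prod.fst : P ⨯ Q ⟶ P)).app m z, ((prod.snd : P ⨯ Q ⟶ Q)).app m z)) (by
      refine ⟨fun z w h => FunctorToTypes.prod_ext' P Q m z w (congrArg Prod.fst h)
        (congrArg Prod.snd h), fun p => ⟨FunctorToTypes.prodMk p.1 p.2,
          Prod.ext (FunctorToTypes.prodMk_fst _ _) (FunctorToTypes.prodMk_snd _ _)⟩⟩)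

variable {P Q m}

@[simp] lemma coprodObjEquiv_inl (x : P.obj m) :
    coprodObjEquiv P Q m (Sum.inl x) = (coprod.inl : P ⟶ P ⨿ Q).app m x := rfl

@[simp] lemma coprodObjEquiv_inr (x : Q.obj m) :
    coprodObjEquiv P Q m (Sum.inr x) = (coprod.inr : Q ⟶ P ⨿ Q).app m x := rfl

@[simp] lemma prodObjEquiv_fst (z : (P ⨯ Q).obj m) :
    (prodObjEquiv P Q m z).1 = (prod.fst : P ⨯ Q ⟶ P).app m z := rfl

@[simp] lemma prodObjEquiv_snd (z : (P ⨯ Q).obj m) :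
    (prodObjEquiv P Q m z).2 = (prod.snd : P ⨯ Q ⟶ Q).app m z := rfl

end Equivs


section Distrib

variable (P Q : SSet.{0})

/-- The distributivity comparison map `(P ⨯ Δ[1]) ⨿ (Q ⨯ Δ[1]) ⟶ (P ⨿ Q) ⨯ Δ[1]`. -/
def distrib : (P ⨯ Δ[1]) ⨿ (Q ⨯ Δ[1]) ⟶ (P ⨿ Q) ⨯ Δ[1] :=
  coprod.desc (prod.map coprod.inl (𝟙 Δ[1])) (prod.map coprod.inr (𝟙 Δ[1]))

@[simp] lemma inl_distrib : coprod.inl ≫ distrib P Q = prod.map coprod.inl (𝟙 Δ[1]) :=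
  coprod.inl_desc _ _

@[simp] lemma inr_distrib : coprod.inr ≫ distrib P Q = prod.map coprod.inr (𝟙 Δ[1]) :=
  coprod.inr_desc _ _

variable {P Q}

lemma comp_app {A B C : SSet.{0}} (u : A ⟶ B) (v : B ⟶ C) (m : SimplexCategoryᵒᵖ)
    (x : A.obj m) : (u ≫ v).app m x = v.app m (u.app m x) := rfl

lemma sset_hom_ext {A B : SSet.{0}} {u v : A ⟶ B}
    (h : ∀ m (x : A.obj m), u.app m x = v.app m x) : u = v :=
  NatTrans.ext (funext fun m => ConcreteCategory.hom_ext _ _ (h m))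

lemma hom_congr {A B : SSet.{0}} {u v : A ⟶ B} (h : u = v) (m : SimplexCategoryᵒᵖ)
    (x : A.obj m) : u.app m x = v.app m x := by rw [h]

instance distrib_isIso : IsIso (distrib P Q) := by
  haveI h : ∀ m, IsIso ((distrib P Q).app m) := ?_
  · exact NatIso.isIso_of_isIso_app _
  intro m
  rw [CategoryTheory.isIso_iff_bijective]
  set i1 : (P ⨯ Δ[1]) ⟶ (P ⨯ Δ[1]) ⨿ (Q ⨯ Δ[1]) := coprod.inl with hi1
  set i2 : (Q ⨯ Δ[1]) ⟶ (P ⨯ Δ[1]) ⨿ (Q ⨯ Δ[1]) := coprod.inr with hi2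
  set j1 : P ⟶ P ⨿ Q := coprod.inl with hj1
  set j2 : Q ⟶ P ⨿ Q := coprod.inr with hj2
  set fP : P ⨯ Δ[1] ⟶ P := prod.fst with hfP
  set sP : P ⨯ Δ[1] ⟶ Δ[1] := prod.snd with hsP
  set fQ : Q ⨯ Δ[1] ⟶ Q := prod.fst with hfQ
  set sQ : Q ⨯ Δ[1] ⟶ Δ[1] := prod.snd with hsQ
  set fR : (P ⨿ Q) ⨯ Δ[1] ⟶ P ⨿ Q := prod.fst with hfR
  set sR : (P ⨿ Q) ⨯ Δ[1] ⟶ Δ[1] := prod.snd with hsR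
  set E := coprodObjEquiv (P ⨯ Δ[1]) (Q ⨯ Δ[1]) m with hE
  set E' := coprodObjEquiv P Q m with hE'
  set F := prodObjEquiv P Δ[1] m with hF
  set F' := prodObjEquiv Q Δ[1] m with hF'
  set G := prodObjEquiv (P ⨿ Q) Δ[1] m with hG
  have dinl : ∀ z : (P ⨯ Δ[1]).obj m, (distrib P Q).app m (i1.app m z)
      = (prod.map j1 (𝟙 Δ[1])).app m z :=
    fun z => hom_congr (inl_distrib P Q) m z
  have dinr : ∀ z : (Q ⨯ Δ[1]).obj m, (distrib P Q).app m (i2.app m z)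
      = (prod.map j2 (𝟙 Δ[1])).app m z :=
    fun z => hom_congr (inr_distrib P Q) m z
  have Gmapl : ∀ z : (P ⨯ Δ[1]).obj m, G ((prod.map j1 (𝟙 Δ[1])).app m z)
      = (j1.app m (fP.app m z), sP.app m z) := by
    intro z
    refine Prod.ext ?_ ?_
    · rw [prodObjEquiv_fst, ← comp_app, hom_congr (prod.map_fst j1 (𝟙 Δ[1])) m z, comp_app]
    · rw [prodObjEquiv_snd, ← comp_app, hom_congr (prod.map_snd j1 (𝟙 Δ[1])) m z, comp_app]
      rfl
  have Gmapr : ∀ z : (Q ⨯ Δ[1]).obj m, G ((prod.map j2 (𝟙 Δ[1])).app m z)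
      = (j2.app m (fQ.app m z), sQ.app m z) := by
    intro z
    refine Prod.ext ?_ ?_
    · rw [prodObjEquiv_fst, ← comp_app, hom_congr (prod.map_fst j2 (𝟙 Δ[1])) m z, comp_app]
    · rw [prodObjEquiv_snd, ← comp_app, hom_congr (prod.map_snd j2 (𝟙 Δ[1])) m z, comp_app]
      rfl
  have Einl : ∀ a, E (Sum.inl a) = i1.app m a := fun _ => rfl
  have Einr : ∀ b, E (Sum.inr b) = i2.app m b := fun _ => rfl
  have E'inl : ∀ a, E' (Sum.inl a) = j1.app m a := fun _ => rfl
  have E'inr : ∀ b, E' (Sum.inr b) = j2.app m b := fun _ => rfl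
  constructor
  · -- injectivity
    intro z z' h
    obtain ⟨s, rfl⟩ := E.surjective z
    obtain ⟨s', rfl⟩ := E.surjective z'
    congr 1
    cases s with
    | inl a => cases s' with
      | inl a' =>
        rw [Einl, Einl, dinl, dinl] at h
        have h1 := congrArg G h
        rw [Gmapl, Gmapl] at h1
        have hfst : (Sum.inl (fP.app m a) : P.obj m ⊕ Q.obj m) = Sum.inl (fP.app m a') := by
          apply E'.injective
          rw [E'inl, E'inl]
          exact congrArg Prod.fst h1
        have hsnd := congrArg Prod.snd h1
        simp only [Sum.inl.injEq] at hfst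
        congr 1
        apply F.injective
        refine Prod.ext ?_ ?_
        · rw [prodObjEquiv_fst, prodObjEquiv_fst]; exact hfst
        · rw [prodObjEquiv_snd, prodObjEquiv_snd]; exact hsnd
      | inr b =>
        exfalso
        rw [Einl, Einr, dinl, dinr] at h
        have h1 := congrArg G h
        rw [Gmapl, Gmapr] at h1
        have : (Sum.inl (fP.app m a) : P.obj m ⊕ Q.obj m) = Sum.inr (fQ.app m b) := by
          apply E'.injective
          rw [E'inl, E'inr]
          exact congrArg Prod.fst h1
        exact Sum.inl_ne_inr this
    | inr b => cases s' with
      | inl a' =>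
        exfalso
        rw [Einr, Einl, dinl, dinr] at h
        have h1 := congrArg G h
        rw [Gmapl, Gmapr] at h1
        have : (Sum.inl (fP.app m a') : P.obj m ⊕ Q.obj m) = Sum.inr (fQ.app m b) := by
          apply E'.injective
          rw [E'inl, E'inr]
          exact congrArg Prod.fst h1.symm
        exact Sum.inl_ne_inr this
      | inr b' =>
        rw [Einr, Einr, dinr, dinr] at h
        have h1 := congrArg G h
        rw [Gmapr, Gmapr] at h1
        have hfst : (Sum.inr (fQ.app m b) : P.obj m ⊕ Q.obj m) = Sum.inr (fQ.app m b') := by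
          apply E'.injective
          rw [E'inr, E'inr]
          exact congrArg Prod.fst h1
        have hsnd := congrArg Prod.snd h1
        simp only [Sum.inr.injEq] at hfst
        congr 1
        apply F'.injective
        refine Prod.ext ?_ ?_
        · rw [prodObjEquiv_fst, prodObjEquiv_fst]; exact hfst
        · rw [prodObjEquiv_snd, prodObjEquiv_snd]; exact hsnd
  · -- surjectivity
    intro y
    cases hsum : E'.symm (fR.app m y) with
    | inl p =>
      refine ⟨i1.app m (F.symm (p, sR.app m y)), ?_⟩
      rw [dinl]
      apply G.injective
      rw [Gmapl]
      have h1 : fP.app m (F.symm (p, sR.app m y)) = p := by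
        have := congrArg Prod.fst (F.apply_symm_apply (p, sR.app m y))
        rw [prodObjEquiv_fst] at this
        exact this
      have h2 : sP.app m (F.symm (p, sR.app m y)) = sR.app m y := by
        have := congrArg Prod.snd (F.apply_symm_apply (p, sR.app m y))
        rw [prodObjEquiv_snd] at this
        exact this
      rw [h1, h2]
      have h3 : fR.app m y = j1.app m p := by
        rw [← E'inl, ← hsum, Equiv.apply_symm_apply]
      refine Prod.ext ?_ ?_
      · rw [prodObjEquiv_fst, h3]
      · rw [prodObjEquiv_snd]
    | inr q =>
      refine ⟨i2.app m (F'.symm (q, sR.app m y)), ?_⟩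
      rw [dinr]
      apply G.injective
      rw [Gmapr]
      have h1 : fQ.app m (F'.symm (q, sR.app m y)) = q := by
        have := congrArg Prod.fst (F'.apply_symm_apply (q, sR.app m y))
        rw [prodObjEquiv_fst] at this
        exact this
      have h2 : sQ.app m (F'.symm (q, sR.app m y)) = sR.app m y := by
        have := congrArg Prod.snd (F'.apply_symm_apply (q, sR.app m y))
        rw [prodObjEquiv_snd] at this
        exact this
      rw [h1, h2]
      have h3 : fR.app m y = j2.app m q := by
        rw [← E'inr, ← hsum, Equiv.apply_symm_apply]
      refine Prod.ext ?_ ?_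
      · rw [prodObjEquiv_fst, h3]
      · rw [prodObjEquiv_snd]

end Distrib

section Homotopy

variable {A₁ A₂ K : SSet.{0}}

lemma SHomotopic.precomp {B : SSet.{0}} {u v : B ⟶ K} (h : SHomotopic u v) (w : A₁ ⟶ B) :
    SHomotopic (w ≫ u) (w ≫ v) := by
  obtain ⟨H, h0, h1⟩ := h
  exact ⟨prod.map w (𝟙 Δ[1]) ≫ H,
    by rw [← Category.assoc, cylIncl_natural, Category.assoc, h0],
    by rw [← Category.assoc, cylIncl_natural, Category.assoc, h1]⟩

lemma prodMap_inl_distrib_inv :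
    prod.map (coprod.inl : A₁ ⟶ A₁ ⨿ A₂) (𝟙 Δ[1]) ≫ inv (distrib A₁ A₂) = coprod.inl := by
  rw [← inl_distrib, Category.assoc, IsIso.hom_inv_id, Category.comp_id]

lemma prodMap_inr_distrib_inv :
    prod.map (coprod.inr : A₂ ⟶ A₁ ⨿ A₂) (𝟙 Δ[1]) ≫ inv (distrib A₁ A₂) = coprod.inr := by
  rw [← inr_distrib, Category.assoc, IsIso.hom_inv_id, Category.comp_id]

/-- Glue two homotopies along a coproduct. -/
lemma glue_homotopies {u₁ v₁ : A₁ ⟶ K} {u₂ v₂ : A₂ ⟶ K}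
    (h₁ : SHomotopic u₁ v₁) (h₂ : SHomotopic u₂ v₂) :
    SHomotopic (coprod.desc u₁ u₂) (coprod.desc v₁ v₂) := by
  obtain ⟨H₁, h10, h11⟩ := h₁
  obtain ⟨H₂, h20, h21⟩ := h₂
  refine ⟨inv (distrib A₁ A₂) ≫ coprod.desc H₁ H₂, ?_, ?_⟩ <;>
  · apply coprod.hom_ext
    · rw [← Category.assoc, ← Category.assoc, ← cylIncl_natural, Category.assoc, Category.assoc,
        ← Category.assoc (prod.map _ _), prodMap_inl_distrib_inv, coprod.inl_desc, coprod.inl_desc]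
      first | (exact h10) | (exact h11)
    · rw [← Category.assoc, ← Category.assoc, ← cylIncl_natural, Category.assoc, Category.assoc,
        ← Category.assoc (prod.map _ _), prodMap_inr_distrib_inv, coprod.inr_desc, coprod.inr_desc]
      first | (exact h20) | (exact h21)

/-- An object-wise empty simplicial set. -/
def ObjEmpty (P : SSet.{0}) : Prop := ∀ m, IsEmpty (P.obj m)

lemma objEmpty_of_zero {P : SSet.{0}} (h : IsEmpty (P.obj (op (SimplexCategory.mk 0)))) :
    ObjEmpty P :=
  fun m => ⟨fun x => h.false (P.map (SimplexCategory.const (SimplexCategory.mk 0) m.unop 0).op x)⟩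

def emptyHom {P : SSet.{0}} (h : ObjEmpty P) (K : SSet.{0}) : P ⟶ K where
  app m := ↾fun x => ((h m).false x).elim
  naturality m _ _ := by ext x; exact ((h m).false x).elim

lemma empty_hom_ext {P K : SSet.{0}} (h : ObjEmpty P) (u v : P ⟶ K) : u = v :=
  by ext m x; exact ((h m).false x).elim

lemma prod_objEmpty {P : SSet.{0}} (h : ObjEmpty P) : ObjEmpty (P ⨯ Δ[1]) :=
  fun m => ⟨fun z => (h m).false ((prod.fst : P ⨯ Δ[1] ⟶ P).app m z)⟩

lemma shomotopic_of_empty {P K : SSet.{0}} (h : ObjEmpty P) (u v : P ⟶ K) :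
    SHomotopic u v :=
  ⟨emptyHom (prod_objEmpty h) K, empty_hom_ext h _ _, empty_hom_ext h _ _⟩

end Homotopy

section WE

variable {A₁ B₁ A₂ B₂ : SSet.{0}} {e₁ : A₁ ⟶ B₁} {e₂ : A₂ ⟶ B₂}

lemma isWeakEquiv_coprodMap (h₁ : IsWeakEquiv e₁) (h₂ : IsWeakEquiv e₂) :
    IsWeakEquiv (coprod.map e₁ e₂) := by
  intro K hK
  obtain ⟨s₁, i₁⟩ := h₁ K hK
  obtain ⟨s₂, i₂⟩ := h₂ K hK
  constructor
  · intro u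
    obtain ⟨v₁, hv₁⟩ := s₁ (coprod.inl ≫ u)
    obtain ⟨v₂, hv₂⟩ := s₂ (coprod.inr ≫ u)
    refine ⟨coprod.desc v₁ v₂, ?_⟩
    have h3 : coprod.map e₁ e₂ ≫ coprod.desc v₁ v₂ = coprod.desc (e₁ ≫ v₁) (e₂ ≫ v₂) := by
      apply coprod.hom_ext <;> simp
    have h4 : coprod.desc (coprod.inl ≫ u) (coprod.inr ≫ u) = u := by
      apply coprod.hom_ext
      · exact coprod.inl_desc _ _
      · exact coprod.inr_desc _ _
    rw [h3, ← h4]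
    exact glue_homotopies hv₁ hv₂
  · intro v w hvw
    have r₁ : SHomotopic (e₁ ≫ (coprod.inl ≫ v)) (e₁ ≫ (coprod.inl ≫ w)) := by
      have := hvw.precomp coprod.inl
      rwa [← Category.assoc, ← Category.assoc, coprod.inl_map, Category.assoc,
        Category.assoc] at this
    have r₂ : SHomotopic (e₂ ≫ (coprod.inr ≫ v)) (e₂ ≫ (coprod.inr ≫ w)) := by
      have := hvw.precomp coprod.inr
      rwa [← Category.assoc, ← Category.assoc, coprod.inr_map, Category.assoc,
        Category.assoc] at this
    have := glue_homotopies (i₁ _ _ r₁) (i₂ _ _ r₂)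
    have h4 : ∀ x : B₁ ⨿ B₂ ⟶ K, coprod.desc (coprod.inl ≫ x) (coprod.inr ≫ x) = x := by
      intro x; apply coprod.hom_ext
      · exact coprod.inl_desc _ _
      · exact coprod.inr_desc _ _
    rwa [h4, h4] at this

lemma empty_target (h : IsWeakEquiv (coprod.map e₁ e₂)) (hA : ObjEmpty A₁) : ObjEmpty B₁ := by
  by_contra hB
  have hvtx : ∃ b₁ : B₁.obj (op (SimplexCategory.mk 0)), True := by
    simp only [ObjEmpty, not_forall] at hB
    obtain ⟨m, hm⟩ := hB
    rw [not_isEmpty_iff] at hm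
    obtain ⟨x⟩ := hm
    exact ⟨B₁.map (SimplexCategory.const (SimplexCategory.mk 0) m.unop 0).op x, trivial⟩
  obtain ⟨b₁, -⟩ := hvtx
  obtain ⟨-, inj⟩ := h (disc Bool) (kan_disc Bool)
  set v := coprod.desc (constD B₁ false) (constD B₂ true) with hv
  set w := coprod.desc (constD B₁ true) (constD B₂ true) with hw
  have hne : coprod.map e₁ e₂ ≫ v = coprod.map e₁ e₂ ≫ w := by
    apply coprod.hom_ext
    · rw [← Category.assoc, ← Category.assoc, coprod.inl_map, Category.assoc, Category.assoc,
        hv, hw, coprod.inl_desc, coprod.inl_desc]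
      exact empty_hom_ext hA _ _
    · rw [← Category.assoc, ← Category.assoc, coprod.inr_map, Category.assoc, Category.assoc,
        hv, hw, coprod.inr_desc, coprod.inr_desc]
  obtain ⟨H, h0, h1⟩ := inj v w (SHomotopic.of_eq hne)
  set b := (coprod.inl : B₁ ⟶ B₁ ⨿ B₂).app (op (SimplexCategory.mk 0)) b₁ with hb
  set bb := vtx b with hbb
  set G : Δ[1] ⟶ disc Bool := prod.lift (toPt Δ[1] ≫ bb) (𝟙 Δ[1]) ≫ H with hG
  have key : ∀ k : Fin 2, constMap Δ[0] k ≫ G = bb ≫ cylIncl (B₁ ⨿ B₂) k ≫ H := by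
    intro k
    rw [hG, ← Category.assoc, ← Category.assoc]
    congr 1
    have e1 : constMap Δ[0] k ≫ toPt Δ[1] = 𝟙 Δ[0] := toPt_unique _ _
    rw [prod.comp_lift, ← Category.assoc, e1, Category.id_comp, Category.comp_id]
    rw [cylIncl, prod.comp_lift, Category.comp_id, comp_constMap]
  have hGG := constMap_comp_disc (P := Δ[0]) G
  rw [key 0, key 1, h0, h1] at hGG
  have heval := ConcreteCategory.congr_hom (congrArg (fun (n : Δ[0] ⟶ disc Bool) =>
    n.app (op (SimplexCategory.mk 0))) hGG) (⟨𝟙 _⟩ : Δ[0].obj (op (SimplexCategory.mk 0)))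
  have hfalse : (bb ≫ v).app (op (SimplexCategory.mk 0)) ⟨𝟙 _⟩ = false := by
    have e : (bb ≫ v).app (op (SimplexCategory.mk 0)) ⟨𝟙 _⟩ = v.app _ b :=
      congrArg (v.app _) (vtx_app_id b)
    rw [e, hb]
    exact hom_congr (coprod.inl_desc (constD B₁ false) (constD B₂ true)) _ b₁
  have htrue : (bb ≫ w).app (op (SimplexCategory.mk 0)) ⟨𝟙 _⟩ = true := by
    have e : (bb ≫ w).app (op (SimplexCategory.mk 0)) ⟨𝟙 _⟩ = w.app _ b :=
      congrArg (w.app _) (vtx_app_id b)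
    rw [e, hb]
    exact hom_congr (coprod.inl_desc (constD B₁ true) (constD B₂ true)) _ b₁
  dsimp only at heval
  rw [hfalse, htrue] at heval
  exact Bool.noConfusion heval

lemma isWeakEquiv_of_coprodMap_left (h : IsWeakEquiv (coprod.map e₁ e₂)) :
    IsWeakEquiv e₁ := by
  intro K hK
  obtain ⟨s, i⟩ := h K hK
  by_cases hk : Nonempty (K.obj (op (SimplexCategory.mk 0)))
  · obtain ⟨k₀⟩ := hk
    constructor
    · intro u₁
      obtain ⟨v, hv⟩ := s (coprod.desc u₁ (ptMap A₂ k₀))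
      refine ⟨coprod.inl ≫ v, ?_⟩
      have := hv.precomp coprod.inl
      have h5 : coprod.inl ≫ coprod.map e₁ e₂ ≫ v = e₁ ≫ (coprod.inl ≫ v) := by
        rw [← Category.assoc, coprod.inl_map, Category.assoc]
      rwa [h5, coprod.inl_desc] at this
    · intro v₁ w₁ hw
      have hvw : SHomotopic (coprod.map e₁ e₂ ≫ coprod.desc v₁ (ptMap B₂ k₀))
          (coprod.map e₁ e₂ ≫ coprod.desc w₁ (ptMap B₂ k₀)) := by
        have h3 : ∀ x₁ : B₁ ⟶ K, coprod.map e₁ e₂ ≫ coprod.desc x₁ (ptMap B₂ k₀)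
            = coprod.desc (e₁ ≫ x₁) (e₂ ≫ ptMap B₂ k₀) := by
          intro x₁; apply coprod.hom_ext <;> simp
        rw [h3, h3]
        exact glue_homotopies hw (SHomotopic.refl _)
      have := (i _ _ hvw).precomp coprod.inl
      rwa [coprod.inl_desc, coprod.inl_desc] at this
  · have hKe : ObjEmpty K := objEmpty_of_zero (not_nonempty_iff.mp hk)
    constructor
    · intro u₁
      have hA : ObjEmpty A₁ := fun m => ⟨fun x => (hKe m).false (u₁.app m x)⟩
      have hB := empty_target h hA
      exact ⟨emptyHom hB K, shomotopic_of_empty hA _ _⟩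
    · intro v₁ w₁ _
      have hB : ObjEmpty B₁ := fun m => ⟨fun x => (hKe m).false (v₁.app m x)⟩
      exact shomotopic_of_empty hB _ _

lemma isWeakEquiv_pre {A' : SSet.{0}} (σ : A' ⟶ A₁) [IsIso σ] {e : A₁ ⟶ B₁}
    (h : IsWeakEquiv e) : IsWeakEquiv (σ ≫ e) := by
  intro K hK
  obtain ⟨s, i⟩ := h K hK
  constructor
  · intro u
    obtain ⟨v, hv⟩ := s (inv σ ≫ u)
    refine ⟨v, ?_⟩
    have := hv.precomp σ
    rwa [IsIso.hom_inv_id_assoc, ← Category.assoc] at this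
  · intro v w hw
    apply i
    have := hw.precomp (inv σ)
    have h5 : ∀ x : B₁ ⟶ K, inv σ ≫ (σ ≫ e) ≫ x = e ≫ x := by
      intro x
      rw [← Category.assoc, ← Category.assoc, IsIso.inv_hom_id, Category.id_comp]
    rwa [h5, h5] at this

lemma isWeakEquiv_of_pre {A' : SSet.{0}} (σ : A' ⟶ A₁) [IsIso σ] {e : A₁ ⟶ B₁}
    (h : IsWeakEquiv (σ ≫ e)) : IsWeakEquiv e := by
  have := isWeakEquiv_pre (inv σ) h
  rwa [IsIso.inv_hom_id_assoc] at this

lemma isWeakEquiv_post {B' : SSet.{0}} (ρ : B₁ ⟶ B') [IsIso ρ] {e : A₁ ⟶ B₁}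
    (h : IsWeakEquiv e) : IsWeakEquiv (e ≫ ρ) := by
  intro K hK
  obtain ⟨s, i⟩ := h K hK
  constructor
  · intro u
    obtain ⟨v, hv⟩ := s u
    refine ⟨inv ρ ≫ v, ?_⟩
    rwa [Category.assoc, IsIso.hom_inv_id_assoc]
  · intro v w hw
    have := (i (ρ ≫ v) (ρ ≫ w) (by rwa [← Category.assoc, ← Category.assoc])).precomp (inv ρ)
    rwa [IsIso.inv_hom_id_assoc, IsIso.inv_hom_id_assoc] at this

lemma isWeakEquiv_of_coprodMap_right (h : IsWeakEquiv (coprod.map e₁ e₂)) :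
    IsWeakEquiv e₂ := by
  have hbr : (coprod.braiding A₂ A₁).hom ≫ coprod.map e₁ e₂ ≫ (coprod.braiding B₁ B₂).hom
      = coprod.map e₂ e₁ := by
    apply coprod.hom_ext <;> simp
    · exact (coprod.inl_desc _ _).trans (coprod.inr_desc _ _)
    · exact (coprod.inr_desc _ _).trans (coprod.inl_desc _ _)
  have : IsWeakEquiv (coprod.map e₂ e₁) := by
    rw [← hbr]
    exact isWeakEquiv_pre _ (isWeakEquiv_post _ h)
  exact isWeakEquiv_of_coprodMap_left this

end WE

section DiscComb

variable {C D : SSet.{0}}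

def discMap {R S : Type} (φ : R → S) : disc R ⟶ disc S where
  app _ := ↾φ
  naturality _ _ _ := rfl

def discSum {R₁ R₂ : Type} (c₁ : disc R₁ ⟶ C) (c₂ : disc R₂ ⟶ C) : disc (R₁ ⊕ R₂) ⟶ C where
  app m := ↾fun r => Sum.rec (fun a => c₁.app m a) (fun b => c₂.app m b) r
  naturality m m' θ := by
    ext r
    cases r with
    | inl a => exact (disc_hom_naturality c₁ θ a).symm
    | inr b => exact (disc_hom_naturality c₂ θ b).symm

lemma discSum_comp {R₁ R₂ : Type} (c₁ : disc R₁ ⟶ C) (c₂ : disc R₂ ⟶ C) (u : C ⟶ D) :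
    discSum c₁ c₂ ≫ u = discSum (c₁ ≫ u) (c₂ ≫ u) :=
  by ext m r; cases r <;> rfl

lemma discMap_inl_discSum {R₁ R₂ : Type} (c₁ : disc R₁ ⟶ C) (c₂ : disc R₂ ⟶ C) :
    discMap Sum.inl ≫ discSum c₁ c₂ = c₁ := rfl

lemma discMap_inr_discSum {R₁ R₂ : Type} (c₁ : disc R₁ ⟶ C) (c₂ : disc R₂ ⟶ C) :
    discMap Sum.inr ≫ discSum c₁ c₂ = c₂ := rfl

lemma discSum_ext {R₁ R₂ : Type} (u : disc (R₁ ⊕ R₂) ⟶ C) :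
    discSum (discMap Sum.inl ≫ u) (discMap Sum.inr ≫ u) = u :=
  by ext m r; cases r <;> rfl

open Classical in
def discSplit {R : Type} (P : R → Prop) (c₁ : disc {r // P r} ⟶ C)
    (c₂ : disc {r // ¬ P r} ⟶ C) : disc R ⟶ C where
  app m := ↾fun r => if hr : P r then c₁.app m ⟨r, hr⟩ else c₂.app m ⟨r, hr⟩
  naturality m m' θ := by
    ext r
    by_cases hr : P r
    · show (if hr : P r then c₁.app m' ⟨r, hr⟩ else c₂.app m' ⟨r, hr⟩) = _
      rw [dif_pos hr]
      show _ = C.map θ (if hr : P r then c₁.app m ⟨r, hr⟩ else c₂.app m ⟨r, hr⟩)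
      rw [dif_pos hr]
      exact (disc_hom_naturality c₁ θ _).symm
    · show (if hr : P r then c₁.app m' ⟨r, hr⟩ else c₂.app m' ⟨r, hr⟩) = _
      rw [dif_neg hr]
      show _ = C.map θ (if hr : P r then c₁.app m ⟨r, hr⟩ else c₂.app m ⟨r, hr⟩)
      rw [dif_neg hr]
      exact (disc_hom_naturality c₂ θ _).symm

open Classical in
lemma discSplit_app_pos {R : Type} {P : R → Prop} (c₁ : disc {r // P r} ⟶ C)
    (c₂ : disc {r // ¬ P r} ⟶ C) {m} {r : R} (hr : P r) :
    (discSplit P c₁ c₂).app m r = c₁.app m ⟨r, hr⟩ := dif_pos hr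

open Classical in
lemma discSplit_app_neg {R : Type} {P : R → Prop} (c₁ : disc {r // P r} ⟶ C)
    (c₂ : disc {r // ¬ P r} ⟶ C) {m} {r : R} (hr : ¬ P r) :
    (discSplit P c₁ c₂).app m r = c₂.app m ⟨r, hr⟩ := dif_neg hr

lemma discSplit_comp {R : Type} (P : R → Prop) (c₁ : disc {r // P r} ⟶ C)
    (c₂ : disc {r // ¬ P r} ⟶ C) (u : C ⟶ D) :
    discSplit P c₁ c₂ ≫ u = discSplit P (c₁ ≫ u) (c₂ ≫ u) :=
  sset_hom_ext fun m (r : R) => by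
    by_cases hr : P r
    · exact (congrArg (u.app m) (discSplit_app_pos c₁ c₂ hr)).trans
        (discSplit_app_pos (c₁ ≫ u) (c₂ ≫ u) hr).symm
    · exact (congrArg (u.app m) (discSplit_app_neg c₁ c₂ hr)).trans
        (discSplit_app_neg (c₁ ≫ u) (c₂ ≫ u) hr).symm

lemma discSplit_val {R : Type} (P : R → Prop) (u : disc R ⟶ C) :
    discSplit P (discMap Subtype.val ≫ u) (discMap Subtype.val ≫ u) = u :=
  sset_hom_ext fun m (r : R) => by
    by_cases hr : P r
    · rw [discSplit_app_pos _ _ hr]; rfl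
    · rw [discSplit_app_neg _ _ hr]; rfl

lemma discMap_val_discSplit_left {R : Type} (P : R → Prop) (c₁ : disc {r // P r} ⟶ C)
    (c₂ : disc {r // ¬ P r} ⟶ C) :
    discMap Subtype.val ≫ discSplit P c₁ c₂ = c₁ :=
  sset_hom_ext fun m (x : {r // P r}) => by
    exact (discSplit_app_pos (m := m) c₁ c₂ x.2).trans (congrArg (c₁.app m) (Subtype.ext rfl))

lemma discMap_val_discSplit_right {R : Type} (P : R → Prop) (c₁ : disc {r // P r} ⟶ C)
    (c₂ : disc {r // ¬ P r} ⟶ C) :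
    discMap Subtype.val ≫ discSplit P c₁ c₂ = c₂ :=
  sset_hom_ext fun m (x : {r // ¬ P r}) => by
    exact (discSplit_app_neg (m := m) c₁ c₂ x.2).trans (congrArg (c₂.app m) (Subtype.ext rfl))

end DiscComb

section Split

variable {Y W : SSet.{0}}

lemma coprodObjEquiv_natural {m m' : SimplexCategoryᵒᵖ} (θ : m ⟶ m')
    (s : Y.obj m ⊕ W.obj m) :
    coprodObjEquiv Y W m' (Sum.map (Y.map θ) (W.map θ) s)
      = (Y ⨿ W).map θ (coprodObjEquiv Y W m s) := by
  cases s with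
  | inl y =>
    exact FunctorToTypes.naturality (coprod.inl : Y ⟶ Y ⨿ W) θ y
  | inr w =>
    exact FunctorToTypes.naturality (coprod.inr : W ⟶ Y ⨿ W) θ w

lemma coprodObjEquiv_symm_natural {m m' : SimplexCategoryᵒᵖ} (θ : m ⟶ m')
    (z : (Y ⨿ W).obj m) :
    (coprodObjEquiv Y W m').symm ((Y ⨿ W).map θ z)
      = Sum.map (Y.map θ) (W.map θ) ((coprodObjEquiv Y W m).symm z) := by
  apply (coprodObjEquiv Y W m').injective
  rw [Equiv.apply_symm_apply, coprodObjEquiv_natural, Equiv.apply_symm_apply]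

lemma sum_inl_getLeft {α β : Type} (s : α ⊕ β) (hs : s.isLeft) :
    Sum.inl (s.getLeft hs) = s := by
  cases s with
  | inl a => rfl
  | inr b => simp at hs

lemma sum_inr_getRight {α β : Type} (s : α ⊕ β) (hs : s.isRight) :
    Sum.inr (s.getRight hs) = s := by
  cases s with
  | inl a => simp at hs
  | inr b => rfl

variable {R : Type} (h : disc R ⟶ Y ⨿ W)

/-- the side of `h r`, at level `m` -/
def sideS (m : SimplexCategoryᵒᵖ) (r : R) : Y.obj m ⊕ W.obj m :=
  (coprodObjEquiv Y W m).symm (h.app m r)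

lemma sideS_natural {m m' : SimplexCategoryᵒᵖ} (θ : m ⟶ m') (r : R) :
    sideS h m' r = Sum.map (Y.map θ) (W.map θ) (sideS h m r) := by
  rw [sideS, sideS, ← disc_hom_naturality h θ r, coprodObjEquiv_symm_natural]

/-- the predicate defining the part of `R` that maps into `Y` -/
def leftP (r : R) : Prop := (sideS h (op (SimplexCategory.mk 0)) r).isLeft = true

lemma sideS_isLeft (m : SimplexCategoryᵒᵖ) (r : R) :
    (sideS h m r).isLeft = (sideS h (op (SimplexCategory.mk 0)) r).isLeft := by
  rw [sideS_natural h (SimplexCategory.const (SimplexCategory.mk 0) m.unop 0).op r]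
  cases sideS h m r <;> rfl

def gLeft : disc {r : R // leftP h r} ⟶ Y where
  app m := ↾fun x => (sideS h m x.1).getLeft (by rw [sideS_isLeft]; exact x.2)
  naturality m m' θ := ConcreteCategory.hom_ext _ _ fun (x : {r : R // leftP h r}) => by
    apply Sum.inl_injective
    show (Sum.inl ((sideS h m' x.1).getLeft _) : Y.obj m' ⊕ W.obj m')
      = Sum.inl (Y.map θ ((sideS h m x.1).getLeft _))
    refine (sum_inl_getLeft _ _).trans ((sideS_natural h θ x.1).trans ?_)
    exact (congrArg (Sum.map (Y.map θ) (W.map θ)) (sum_inl_getLeft (sideS h m x.1)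
      (by rw [sideS_isLeft]; exact x.2))).symm

def gRight : disc {r : R // ¬ leftP h r} ⟶ W where
  app m := ↾fun x => (sideS h m x.1).getRight (by
    rw [← Sum.not_isLeft, sideS_isLeft]
    simpa [leftP] using x.2)
  naturality m m' θ := ConcreteCategory.hom_ext _ _ fun (x : {r : R // ¬ leftP h r}) => by
    apply Sum.inr_injective
    show (Sum.inr ((sideS h m' x.1).getRight _) : Y.obj m' ⊕ W.obj m')
      = Sum.inr (W.map θ ((sideS h m x.1).getRight _))
    refine (sum_inr_getRight _ _).trans ((sideS_natural h θ x.1).trans ?_)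
    exact (congrArg (Sum.map (Y.map θ) (W.map θ)) (sum_inr_getRight (sideS h m x.1)
      (by rw [← Sum.not_isLeft, sideS_isLeft]; simpa [leftP] using x.2))).symm

lemma h_eq_discSplit :
    h = discSplit (leftP h) (gLeft h ≫ coprod.inl) (gRight h ≫ coprod.inr) := by
  refine sset_hom_ext fun m (r : R) => ?_
  by_cases hr : leftP h r
  · rw [discSplit_app_pos _ _ hr]
    show h.app m r = (coprod.inl : Y ⟶ Y ⨿ W).app m ((gLeft h).app m ⟨r, hr⟩)
    rw [show (coprod.inl : Y ⟶ Y ⨿ W).app m ((gLeft h).app m ⟨r, hr⟩)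
      = coprodObjEquiv Y W m (Sum.inl ((gLeft h).app m ⟨r, hr⟩)) from rfl]
    rw [show (Sum.inl ((gLeft h).app m ⟨r, hr⟩) : Y.obj m ⊕ W.obj m) = sideS h m r from
      sum_inl_getLeft _ _]
    rw [sideS, Equiv.apply_symm_apply]
  · rw [discSplit_app_neg _ _ hr]
    show h.app m r = (coprod.inr : W ⟶ Y ⨿ W).app m ((gRight h).app m ⟨r, hr⟩)
    rw [show (coprod.inr : W ⟶ Y ⨿ W).app m ((gRight h).app m ⟨r, hr⟩)
      = coprodObjEquiv Y W m (Sum.inr ((gRight h).app m ⟨r, hr⟩)) from rfl]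
    rw [show (Sum.inr ((gRight h).app m ⟨r, hr⟩) : Y.obj m ⊕ W.obj m) = sideS h m r from
      sum_inr_getRight _ _]
    rw [sideS, Equiv.apply_symm_apply]

end Split

section Shuffle

variable {X Z Y W : SSet.{0}}

/-- shuffle iso for a split predicate -/
def shuffle1 {R : Type} (P : R → Prop) (X Z : SSet.{0}) :
    (X ⨿ Z) ⨿ disc R ⟶ (X ⨿ disc {r // P r}) ⨿ (Z ⨿ disc {r // ¬ P r}) :=
  coprod.desc (coprod.map coprod.inl coprod.inl)
    (discSplit P (coprod.inr ≫ coprod.inl) (coprod.inr ≫ coprod.inr))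

def shuffle1Inv {R : Type} (P : R → Prop) (X Z : SSet.{0}) :
    (X ⨿ disc {r // P r}) ⨿ (Z ⨿ disc {r // ¬ P r}) ⟶ (X ⨿ Z) ⨿ disc R :=
  coprod.desc (coprod.desc (coprod.inl ≫ coprod.inl) (discMap Subtype.val ≫ coprod.inr))
    (coprod.desc (coprod.inr ≫ coprod.inl) (discMap Subtype.val ≫ coprod.inr))

instance shuffle1_isIso {R : Type} (P : R → Prop) : IsIso (shuffle1 P X Z) := by
  refine ⟨shuffle1Inv P X Z, ?_, ?_⟩
  · apply coprod.hom_ext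
    · rw [← Category.assoc, shuffle1, coprod.inl_desc, Category.comp_id]
      apply coprod.hom_ext
      · rw [← Category.assoc, coprod.inl_map, Category.assoc, shuffle1Inv, coprod.inl_desc,
          coprod.inl_desc]
      · rw [← Category.assoc, coprod.inr_map, Category.assoc, shuffle1Inv, coprod.inr_desc,
          coprod.inl_desc]
    · rw [← Category.assoc, shuffle1, coprod.inr_desc, Category.comp_id, discSplit_comp]
      conv_rhs => rw [show (coprod.inr : disc R ⟶ (X ⨿ Z) ⨿ disc R)
        = discSplit P (discMap Subtype.val ≫ coprod.inr) (discMap Subtype.val ≫ coprod.inr)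
        from (discSplit_val P _).symm]
      congr 1
      · rw [Category.assoc, shuffle1Inv, coprod.inl_desc, coprod.inr_desc]
      · rw [Category.assoc, shuffle1Inv, coprod.inr_desc, coprod.inr_desc]
  · apply coprod.hom_ext
    · rw [← Category.assoc, shuffle1Inv, coprod.inl_desc, Category.comp_id]
      apply coprod.hom_ext
      · rw [← Category.assoc, coprod.inl_desc, Category.assoc, shuffle1, coprod.inl_desc,
          coprod.inl_map]
      · rw [← Category.assoc, coprod.inr_desc, Category.assoc, shuffle1, coprod.inr_desc,
          discMap_val_discSplit_left]
    · rw [← Category.assoc, shuffle1Inv, coprod.inr_desc, Category.comp_id]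
      apply coprod.hom_ext
      · rw [← Category.assoc, coprod.inl_desc, Category.assoc, shuffle1, coprod.inl_desc,
          coprod.inr_map]
      · rw [← Category.assoc, coprod.inr_desc, Category.assoc, shuffle1, coprod.inr_desc,
          discMap_val_discSplit_right]

lemma decomp1 (f : X ⟶ Y) (g : Z ⟶ W) {R : Type} (h : disc R ⟶ Y ⨿ W) :
    coprod.desc (coprod.map f g) h = shuffle1 (leftP h) X Z ≫
      coprod.map (coprod.desc f (gLeft h)) (coprod.desc g (gRight h)) := by
  apply coprod.hom_ext
  · rw [coprod.inl_desc, ← Category.assoc, shuffle1, coprod.inl_desc, coprod.map_map,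
      coprod.inl_desc, coprod.inl_desc]
  · rw [coprod.inr_desc, ← Category.assoc, shuffle1, coprod.inr_desc, discSplit_comp]
    nth_rewrite 1 [h_eq_discSplit h]
    congr 1
    · rw [Category.assoc, coprod.inl_map, ← Category.assoc, coprod.inr_desc]
    · rw [Category.assoc, coprod.inr_map, ← Category.assoc, coprod.inr_desc]

/-- shuffle iso for a sum -/
def shuffle2 (R₁ R₂ : Type) (X Z : SSet.{0}) :
    (X ⨿ Z) ⨿ disc (R₁ ⊕ R₂) ⟶ (X ⨿ disc R₁) ⨿ (Z ⨿ disc R₂) :=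
  coprod.desc (coprod.map coprod.inl coprod.inl)
    (discSum (coprod.inr ≫ coprod.inl) (coprod.inr ≫ coprod.inr))

def shuffle2Inv (R₁ R₂ : Type) (X Z : SSet.{0}) :
    (X ⨿ disc R₁) ⨿ (Z ⨿ disc R₂) ⟶ (X ⨿ Z) ⨿ disc (R₁ ⊕ R₂) :=
  coprod.desc (coprod.desc (coprod.inl ≫ coprod.inl) (discMap Sum.inl ≫ coprod.inr))
    (coprod.desc (coprod.inr ≫ coprod.inl) (discMap Sum.inr ≫ coprod.inr))

instance shuffle2_isIso (R₁ R₂ : Type) : IsIso (shuffle2 R₁ R₂ X Z) := by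
  refine ⟨shuffle2Inv R₁ R₂ X Z, ?_, ?_⟩
  · apply coprod.hom_ext
    · rw [← Category.assoc, shuffle2, coprod.inl_desc, Category.comp_id]
      apply coprod.hom_ext
      · rw [← Category.assoc, coprod.inl_map, Category.assoc, shuffle2Inv, coprod.inl_desc,
          coprod.inl_desc]
      · rw [← Category.assoc, coprod.inr_map, Category.assoc, shuffle2Inv, coprod.inr_desc,
          coprod.inl_desc]
    · rw [← Category.assoc, shuffle2, coprod.inr_desc, Category.comp_id, discSum_comp]
      conv_rhs => rw [show (coprod.inr : disc (R₁ ⊕ R₂) ⟶ (X ⨿ Z) ⨿ disc (R₁ ⊕ R₂))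
        = discSum (discMap Sum.inl ≫ coprod.inr) (discMap Sum.inr ≫ coprod.inr)
        from (discSum_ext _).symm]
      congr 1
      · rw [Category.assoc, shuffle2Inv, coprod.inl_desc, coprod.inr_desc]
      · rw [Category.assoc, shuffle2Inv, coprod.inr_desc, coprod.inr_desc]
  · apply coprod.hom_ext
    · rw [← Category.assoc, shuffle2Inv, coprod.inl_desc, Category.comp_id]
      apply coprod.hom_ext
      · rw [← Category.assoc, coprod.inl_desc, Category.assoc, shuffle2, coprod.inl_desc,
          coprod.inl_map]
      · rw [← Category.assoc, coprod.inr_desc, Category.assoc, shuffle2, coprod.inr_desc,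
          discMap_inl_discSum]
    · rw [← Category.assoc, shuffle2Inv, coprod.inr_desc, Category.comp_id]
      apply coprod.hom_ext
      · rw [← Category.assoc, coprod.inl_desc, Category.assoc, shuffle2, coprod.inl_desc,
          coprod.inr_map]
      · rw [← Category.assoc, coprod.inr_desc, Category.assoc, shuffle2, coprod.inr_desc,
          discMap_inr_discSum]

lemma decomp2 (f : X ⟶ Y) (g : Z ⟶ W) {R₁ R₂ : Type}
    (g₁ : disc R₁ ⟶ Y) (g₂ : disc R₂ ⟶ W) :
    coprod.desc (coprod.map f g) (discSum (g₁ ≫ coprod.inl) (g₂ ≫ coprod.inr))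
      = shuffle2 R₁ R₂ X Z ≫ coprod.map (coprod.desc f g₁) (coprod.desc g g₂) := by
  apply coprod.hom_ext
  · rw [coprod.inl_desc, ← Category.assoc, shuffle2, coprod.inl_desc, coprod.map_map,
      coprod.inl_desc, coprod.inl_desc]
  · rw [coprod.inr_desc, ← Category.assoc, shuffle2, coprod.inr_desc, discSum_comp]
    congr 1
    · rw [Category.assoc, coprod.inl_map, ← Category.assoc, coprod.inr_desc]
    · rw [Category.assoc, coprod.inr_map, ← Category.assoc, coprod.inr_desc]

end Shuffle


/-- a disjoint union of monomorphisms is an extension by a set iff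
both summands are. -/
theorem stmt2 {X Y Z W : SSet.{0}} (f : X ⟶ Y) (g : Z ⟶ W)
    (hf : Mono f) (hg : Mono g) :
    IsExtensionBySet (coprod.map f g) ↔ (IsExtensionBySet f ∧ IsExtensionBySet g) := by
  constructor
  · rintro ⟨R, h, hwe⟩
    rw [decomp1 f g h] at hwe
    have hmid := isWeakEquiv_of_pre (shuffle1 (leftP h) X Z) hwe
    exact ⟨⟨_, gLeft h, isWeakEquiv_of_coprodMap_left hmid⟩,
      ⟨_, gRight h, isWeakEquiv_of_coprodMap_right hmid⟩⟩
  · rintro ⟨⟨R₁, g₁, h₁⟩, ⟨R₂, g₂, h₂⟩⟩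
    refine ⟨R₁ ⊕ R₂, discSum (g₁ ≫ coprod.inl) (g₂ ≫ coprod.inr), ?_⟩
    rw [decomp2 f g g₁ g₂]
    exact isWeakEquiv_pre _ (isWeakEquiv_coprodMap h₁ h₂)

end Paper
end
end

section
/- Let i ⊣ r be an adjunction where i is fully faithful, and suppose i is both a left and a right Quillen equivalence between model categories M (on the domain of i) and N (on the codomain). Then the model structure on M is both left-induced and right-induced from N along i: the cofibrations and weak equivalences of M are exactly the maps whose images under i are cofibrations and weak equivalences in N, and likewise fibrations and weak equivalences are created by i. -/
open CategoryTheory CategoryTheory.Limits Simplicial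

noncomputable section

namespace Paper

section Model

universe v u v' u'

variable {C : Type u} [Category.{v} C]

/-- `f` is a retract of `g` in the arrow category. -/
def IsRetractOf {A B A' B' : C} (f : A ⟶ B) (g : A' ⟶ B') : Prop :=
  ∃ (i : A ⟶ A') (r : A' ⟶ A) (j : B ⟶ B') (s : B' ⟶ B),
    i ≫ r = 𝟙 A ∧ j ≫ s = 𝟙 B ∧ i ≫ g = f ≫ j ∧ g ≫ s = r ≫ f

/-- A (Quillen) model structure on a category: weak equivalences, cofibrations and
fibrations, satisfying two-out-of-three, retract closure, lifting and factorization. -/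
structure ModelStructure (C : Type u) [Category.{v} C] where
  W : MorphismProperty C
  Cof : MorphismProperty C
  Fib : MorphismProperty C
  w_id : ∀ X : C, W (𝟙 X)
  w_comp : ∀ {X Y Z : C} (f : X ⟶ Y) (g : Y ⟶ Z), W f → W g → W (f ≫ g)
  w_two_of_three_left : ∀ {X Y Z : C} (f : X ⟶ Y) (g : Y ⟶ Z), W g → W (f ≫ g) → W f
  w_two_of_three_right : ∀ {X Y Z : C} (f : X ⟶ Y) (g : Y ⟶ Z), W f → W (f ≫ g) → W g
  w_retract : ∀ {A B A' B' : C} (f : A ⟶ B) (g : A' ⟶ B'), IsRetractOf f g → W g → W f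
  cof_retract : ∀ {A B A' B' : C} (f : A ⟶ B) (g : A' ⟶ B'), IsRetractOf f g → Cof g → Cof f
  fib_retract : ∀ {A B A' B' : C} (f : A ⟶ B) (g : A' ⟶ B'), IsRetractOf f g → Fib g → Fib f
  lift_trivCof_fib : ∀ {A B X Y : C} (i : A ⟶ B) (p : X ⟶ Y),
    Cof i → W i → Fib p → HasLiftingProperty i p
  lift_cof_trivFib : ∀ {A B X Y : C} (i : A ⟶ B) (p : X ⟶ Y),
    Cof i → Fib p → W p → HasLiftingProperty i p
  fact_cof_trivFib : ∀ {X Y : C} (f : X ⟶ Y), ∃ (Z : C) (i : X ⟶ Z) (p : Z ⟶ Y),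
    Cof i ∧ Fib p ∧ W p ∧ i ≫ p = f
  fact_trivCof_fib : ∀ {X Y : C} (f : X ⟶ Y), ∃ (Z : C) (i : X ⟶ Z) (p : Z ⟶ Y),
    Cof i ∧ W i ∧ Fib p ∧ i ≫ p = f

variable {D : Type u'} [Category.{v'} D]

/-- A left Quillen functor: preserves cofibrations and trivial cofibrations. -/
def LeftQuillen (M : ModelStructure C) (N : ModelStructure D) (F : C ⥤ D) : Prop :=
  (∀ {A B : C} (f : A ⟶ B), M.Cof f → N.Cof (F.map f)) ∧
  (∀ {A B : C} (f : A ⟶ B), M.Cof f → M.W f → N.Cof (F.map f) ∧ N.W (F.map f))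

/-- A right Quillen functor: preserves fibrations and trivial fibrations. -/
def RightQuillen (M : ModelStructure C) (N : ModelStructure D) (G : C ⥤ D) : Prop :=
  (∀ {A B : C} (f : A ⟶ B), M.Fib f → N.Fib (G.map f)) ∧
  (∀ {A B : C} (f : A ⟶ B), M.Fib f → M.W f → N.Fib (G.map f) ∧ N.W (G.map f))

/-- Cofibrant object. -/
def IsCofibrant [Limits.HasInitial C] (M : ModelStructure C) (X : C) : Prop :=
  M.Cof (Limits.initial.to X)

/-- Fibrant object. -/
def IsFibrant [Limits.HasTerminal C] (M : ModelStructure C) (X : C) : Prop :=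
  M.Fib (Limits.terminal.from X)

/-- The Quillen-equivalence condition for an adjunction `F ⊣ G`: for a cofibrant `A`
and a fibrant `X`, a map `F A ⟶ X` is a weak equivalence iff its adjoint is. -/
def QuillenEquivCondition [Limits.HasInitial C] [Limits.HasTerminal D]
    (M : ModelStructure C) (N : ModelStructure D)
    (F : C ⥤ D) (G : D ⥤ C) (adj : F ⊣ G) : Prop :=
  ∀ (A : C) (X : D), IsCofibrant M A → IsFibrant N X →
    ∀ f : F.obj A ⟶ X, (N.W f ↔ M.W (adj.homEquiv A X f))

end Model

section Aux

universe v u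

variable {C : Type u} [Category.{v} C]

/-- Any isomorphism is a retract of an identity. -/
lemma isRetractOf_id_of_isIso {X Y : C} (φ : X ⟶ Y) [IsIso φ] : IsRetractOf φ (𝟙 X) :=
  ⟨𝟙 X, 𝟙 X, inv φ, φ, by simp, by simp, by simp, by simp⟩

/-- Isomorphisms are weak equivalences. -/
lemma w_of_isIso (M : ModelStructure C) {X Y : C} (φ : X ⟶ Y) [IsIso φ] : M.W φ :=
  M.w_retract φ (𝟙 X) (isRetractOf_id_of_isIso φ) (M.w_id X)

/-- Fibrations are stable under postcomposition with isomorphisms. -/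
lemma fib_comp_isIso (M : ModelStructure C) {X Y Z : C} (p : X ⟶ Y) (φ : Y ⟶ Z) [IsIso φ]
    (hp : M.Fib p) : M.Fib (p ≫ φ) :=
  M.fib_retract (p ≫ φ) p ⟨𝟙 X, 𝟙 X, inv φ, φ, by simp, by simp, by simp, by simp⟩ hp

end Aux

/-- if `i` is fully faithful with adjunctions `l ⊣ i` and `i ⊣ r`,
and `i` is both a left Quillen equivalence (with right adjoint `r`) and a right
Quillen equivalence (with left adjoint `l`), then the model structure on its
domain is both left- and right-induced: `i` creates cofibrations, fibrations
and weak equivalences. -/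
theorem stmt16 {C : Type u} {D : Type u'} [Category.{v} C] [Category.{v'} D]
    [Limits.HasInitial C] [Limits.HasTerminal C]
    [Limits.HasInitial D] [Limits.HasTerminal D]
    (M : ModelStructure C) (N : ModelStructure D)
    (i : C ⥤ D) (r : D ⥤ C) (l : D ⥤ C)
    [i.Full] [i.Faithful]
    (adj_ir : i ⊣ r) (adj_li : l ⊣ i)
    (hiLQ : LeftQuillen M N i)
    (hiLQE : QuillenEquivCondition M N i r adj_ir)
    (hiRQ : RightQuillen M N i)
    (hlLQ : LeftQuillen N M l)
    (hlLQE : QuillenEquivCondition N M l i adj_li) :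
    ∀ {A B : C} (f : A ⟶ B),
      (M.Cof f ↔ N.Cof (i.map f)) ∧
      (M.W f ↔ N.W (i.map f)) ∧
      (M.Fib f ↔ N.Fib (i.map f)) := by
  -- `i` preserves terminal objects since it is a right adjoint.
  have hterm : IsTerminal (i.obj (⊤_ C)) :=
    IsTerminal.ofUniqueHom (fun Y => (adj_li.homEquiv Y (⊤_ C)) (terminal.from _))
      (fun Y m => by
        apply (adj_li.homEquiv Y (⊤_ C)).symm.injective
        exact Subsingleton.elim _ _)
  let φ : i.obj (⊤_ C) ≅ ⊤_ D := hterm.uniqueUpToIso terminalIsTerminal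
  -- the image under `i` of a fibrant object of `M` is fibrant in `N`
  have hfib_obj : ∀ (X : C), IsFibrant M X → IsFibrant N (i.obj X) := by
    intro X hX
    have h1 : N.Fib (i.map (terminal.from X)) := hiRQ.1 _ hX
    have h2 : N.Fib (i.map (terminal.from X) ≫ φ.hom) := fib_comp_isIso N _ _ h1
    have : terminal.from (i.obj X) = i.map (terminal.from X) ≫ φ.hom :=
      Subsingleton.elim _ _
    rw [IsFibrant, this]
    exact h2
  -- `i` reflects weak equivalences
  have wrefl : ∀ {A B : C} (f : A ⟶ B), N.W (i.map f) → M.W f := by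
    intro A B f hw
    -- cofibrant replacement of A
    obtain ⟨QA, q, pA, hq, hpAf, hpAw, hfacA⟩ := M.fact_cof_trivFib (initial.to A)
    -- fibrant replacement of B
    obtain ⟨RB, j, k, hjc, hjw, hkf, hfacB⟩ := M.fact_trivCof_fib (terminal.from B)
    have hQA : IsCofibrant M QA := by
      have : initial.to QA = q := Subsingleton.elim _ _
      rw [IsCofibrant, this]; exact hq
    have hRB : IsFibrant M RB := by
      have : terminal.from RB = k := Subsingleton.elim _ _
      rw [IsFibrant, this]; exact hkf
    set g : QA ⟶ RB := pA ≫ f ≫ j with hg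
    have hwig : N.W (i.map g) := by
      have h1 : N.W (i.map pA) := (hiRQ.2 pA hpAf hpAw).2
      have h2 : N.W (i.map j) := (hiLQ.2 j hjc hjw).2
      have : i.map g = i.map pA ≫ i.map f ≫ i.map j := by simp [hg]
      rw [this]
      exact N.w_comp _ _ h1 (N.w_comp _ _ hw h2)
    -- apply the Quillen equivalence condition
    have hequiv := hiLQE QA (i.obj RB) hQA (hfib_obj RB hRB) (i.map g)
    have hMg' : M.W ((adj_ir.homEquiv QA (i.obj RB)) (i.map g)) := hequiv.mp hwig
    have hnat : (adj_ir.homEquiv QA (i.obj RB)) (i.map g) = g ≫ adj_ir.unit.app RB := by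
      rw [Adjunction.homEquiv_unit]
      exact (adj_ir.unit.naturality g).symm
    rw [hnat] at hMg'
    -- the unit is an iso since `i` is fully faithful
    have hMg : M.W g :=
      M.w_two_of_three_left g (adj_ir.unit.app RB) (w_of_isIso M _) hMg'
    -- unravel the replacements using 2-out-of-3
    have h3 : M.W (f ≫ j) := M.w_two_of_three_right pA (f ≫ j) hpAw (by rw [← hg]; exact hMg)
    exact M.w_two_of_three_left f j hjw h3
  intro A B f
  refine ⟨⟨fun hc => hiLQ.1 f hc, ?_⟩, ⟨?_, fun hw => wrefl f hw⟩, ⟨fun hf => hiRQ.1 f hf, ?_⟩⟩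
  · -- `i` reflects cofibrations
    intro hc
    obtain ⟨Z, c, p, hcc, hpf, hpw, hfac⟩ := M.fact_cof_trivFib f
    have hip := hiRQ.2 p hpf hpw
    have hlp : HasLiftingProperty (i.map f) (i.map p) :=
      N.lift_cof_trivFib _ _ hc hip.1 hip.2
    have sq : CommSq (i.map c) (i.map f) (i.map p) (𝟙 (i.obj B)) :=
      ⟨by rw [← i.map_comp, hfac]; simp⟩
    obtain ⟨⟨⟨h, hleft, hright⟩⟩⟩ := hlp.sq_hasLift sq
    let g : B ⟶ Z := i.preimage h
    have hg1 : f ≫ g = c := i.map_injective (by simp [g, hleft])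
    have hg2 : g ≫ p = 𝟙 B := i.map_injective (by simp [g, hright])
    exact M.cof_retract f c ⟨𝟙 A, 𝟙 A, g, p, by simp, hg2, by simp [hg1], by
      rw [hfac]; simp⟩ hcc
  · -- `i` preserves weak equivalences
    intro hw
    obtain ⟨Z, c, p, hcc, hpf, hpw, hfac⟩ := M.fact_cof_trivFib f
    have hcw : M.W c := M.w_two_of_three_left c p hpw (by rw [hfac]; exact hw)
    have h1 := hiLQ.2 c hcc hcw
    have h2 := hiRQ.2 p hpf hpw
    have : i.map f = i.map c ≫ i.map p := by rw [← i.map_comp, hfac]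
    rw [this]
    exact N.w_comp _ _ h1.2 h2.2
  · -- `i` reflects fibrations
    intro hf
    obtain ⟨Z, c, p, hcc, hcw, hpf, hfac⟩ := M.fact_trivCof_fib f
    have hic := hiLQ.2 c hcc hcw
    have hlp : HasLiftingProperty (i.map c) (i.map f) :=
      N.lift_trivCof_fib _ _ hic.1 hic.2 hf
    have sq : CommSq (𝟙 (i.obj A)) (i.map c) (i.map f) (i.map p) :=
      ⟨by rw [← i.map_comp, hfac]; simp⟩
    obtain ⟨⟨⟨h, hleft, hright⟩⟩⟩ := hlp.sq_hasLift sq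
    let g : Z ⟶ A := i.preimage h
    have hg1 : c ≫ g = 𝟙 A := i.map_injective (by simp [g, hleft])
    have hg2 : g ≫ f = p := i.map_injective (by simp [g, hright])
    exact M.fib_retract f p ⟨c, g, 𝟙 B, 𝟙 B, hg1, by simp, by rw [hfac]; simp, by
      simp [hg2]⟩ hpf

end Paper
end
end
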